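/- Let z = (z_1,…,z_d) be a random vector whose components are mutually independent, each with finite fourth moment, write μᵢ = E[zᵢ], σᵢ² = Var(zᵢ), m₃ᵢ = E[(zᵢ − μᵢ)³], and m₄ᵢ = E[(zᵢ − μᵢ)⁴]. Then for all vectors a, b ∈ ℝ^d, with U = Σᵢ aᵢ zᵢ and V = Σⱼ bⱼ zⱼ: Cov(U², V²) = 4 (Σᵢ aᵢ μᵢ)(Σⱼ bⱼ μⱼ)(Σᵢ aᵢ bᵢ σᵢ²) + 2 (Σᵢ aᵢ bᵢ σᵢ²)² + Σᵢ aᵢ² bᵢ² (m₄ᵢ − 3 σᵢ⁴) + 2 (Σᵢ aᵢ μᵢ)(Σᵢ aᵢ bᵢ² m₃ᵢ) + 2 (Σⱼ bⱼ μⱼ)(Σᵢ aᵢ² bᵢ m₃ᵢ). In particular, Cov(U², V²) is a linear combination of the second, third and fourth central moments of the zᵢ whose coefficients are polynomials in the entries of a and b. -/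

import Mathlib

open MeasureTheory ProbabilityTheory

set_option linter.unusedSectionVars false

open MeasureTheory ProbabilityTheory

section AuxCov

variable {Ω : Type*} {mΩ : MeasurableSpace Ω} {μ : Measure Ω} [IsProbabilityMeasure μ]
  {d : ℕ} {w : Fin d → Ω → ℝ}

lemma covAux_memℒp_mul {f g : Ω → ℝ} (hf : MemLp f 4 μ) (hg : MemLp g 4 μ) :
    MemLp (fun ω => f ω * g ω) 2 μ := by
  have : ENNReal.HolderTriple 4 4 2 := ⟨by
    rw [← ENNReal.add_halves 2⁻¹]; congr 1 <;>
        rw [ENNReal.div_eq_inv_mul, ← ENNReal.mul_inv] <;> norm_num⟩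
  have h := hg.smul (φ := f) hf (p := 4) (q := 4) (r := 2)
  exact h

lemma covAux_integrable_mul {f g : Ω → ℝ} (hf : MemLp f 2 μ) (hg : MemLp g 2 μ) :
    Integrable (fun ω => f ω * g ω) μ := by
  have : ENNReal.HolderTriple 2 2 1 := ⟨by rw [inv_one]; exact ENNReal.inv_two_add_inv_two⟩
  have h := hg.smul (φ := f) hf (p := 2) (q := 2) (r := 1)
  exact memLp_one_iff_integrable.mp h

variable (hm : ∀ i, Measurable (w i))
  (hind : iIndepFun w μ)
  (hmean : ∀ i, ∫ ω, w i ω ∂μ = 0)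

include hm hind hmean

lemma covAux_E2zero (i j : Fin d) (hij : i ≠ j) :
    ∫ ω, w i ω * w j ω ∂μ = 0 := by
  have h := (hind.indepFun hij).integral_fun_mul_eq_mul_integral (hm i).aestronglyMeasurable
    (hm j).aestronglyMeasurable
  rw [h, hmean j, mul_zero]

lemma covAux_E22 (i k : Fin d) (hik : i ≠ k) :
    ∫ ω, w i ω * w i ω * (w k ω * w k ω) ∂μ
      = (∫ ω, w i ω * w i ω ∂μ) * ∫ ω, w k ω * w k ω ∂μ := by
  have h : IndepFun (fun ω => w i ω * w i ω) (fun ω => w k ω * w k ω) μ :=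
    (hind.indepFun hik).comp (measurable_id.mul measurable_id)
      (measurable_id.mul measurable_id)
  exact h.integral_fun_mul_eq_mul_integral ((hm i).mul (hm i)).aestronglyMeasurable
    ((hm k).mul (hm k)).aestronglyMeasurable

lemma covAux_E3zero (i j k : Fin d) (hki : k ≠ i) (hkj : k ≠ j) :
    ∫ ω, w i ω * w j ω * w k ω ∂μ = 0 := by
  have h := hind.indepFun_prodMk hm i j k (Ne.symm hki) (Ne.symm hkj)
  have h2 : IndepFun (fun ω => w i ω * w j ω) (w k) μ :=
    h.comp (measurable_fst.mul measurable_snd) measurable_id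
  have h3 := h2.integral_fun_mul_eq_mul_integral ((hm i).mul (hm j)).aestronglyMeasurable
    (hm k).aestronglyMeasurable
  rw [h3, hmean k, mul_zero]

lemma covAux_E4zero (i j k l : Fin d) (hli : l ≠ i) (hlj : l ≠ j) (hlk : l ≠ k) :
    ∫ ω, w i ω * w j ω * w k ω * w l ω ∂μ = 0 := by
  classical
  have hdisj : Disjoint ({i, j, k} : Finset (Fin d)) {l} := by
    rw [Finset.disjoint_singleton_right]
    simp only [Finset.mem_insert, Finset.mem_singleton]
    push_neg
    exact ⟨hli, hlj, hlk⟩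
  have h := hind.indepFun_finset {i, j, k} {l} hdisj hm
  have hiS : i ∈ ({i, j, k} : Finset (Fin d)) := by simp
  have hjS : j ∈ ({i, j, k} : Finset (Fin d)) := by simp
  have hkS : k ∈ ({i, j, k} : Finset (Fin d)) := by simp
  have hlT : l ∈ ({l} : Finset (Fin d)) := by simp
  have hφ : Measurable fun v : ((x : ({i, j, k} : Finset (Fin d))) → ℝ) =>
      v ⟨i, hiS⟩ * v ⟨j, hjS⟩ * v ⟨k, hkS⟩ :=
    ((measurable_pi_apply (⟨i, hiS⟩ : ({i, j, k} : Finset (Fin d)))).mul (measurable_pi_apply (⟨j, hjS⟩ : ({i, j, k} : Finset (Fin d))))).mul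
      (measurable_pi_apply (⟨k, hkS⟩ : ({i, j, k} : Finset (Fin d))))
  have hψ : Measurable fun v : ((x : ({l} : Finset (Fin d))) → ℝ) => v ⟨l, hlT⟩ :=
    measurable_pi_apply _
  have h2 : IndepFun (fun ω => w i ω * w j ω * w k ω) (w l) μ := h.comp hφ hψ
  have h3 := h2.integral_fun_mul_eq_mul_integral (((hm i).mul (hm j)).mul (hm k)).aestronglyMeasurable
    (hm l).aestronglyMeasurable
  rw [h3, hmean l, mul_zero]

lemma covAux_E3full (i j k : Fin d) :
    ∫ ω, w i ω * w j ω * w k ω ∂μ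
      = if i = j ∧ j = k then ∫ ω, w i ω * w i ω * w i ω ∂μ else 0 := by
  by_cases hij : i = j
  · subst hij
    by_cases hik : i = k
    · subst hik; simp
    · rw [if_neg (by tauto)]
      exact covAux_E3zero hm hind hmean i i k (fun h => hik h.symm) (fun h => hik h.symm)
  · rw [if_neg (by tauto)]
    by_cases hik : i = k
    · subst hik
      have hre : (∫ ω, w i ω * w j ω * w i ω ∂μ) = ∫ ω, w i ω * w i ω * w j ω ∂μ := by
        congr 1; funext ω; ring
      rw [hre]
      exact covAux_E3zero hm hind hmean i i j (Ne.symm hij) (Ne.symm hij)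
    · by_cases hjk : j = k
      · subst hjk
        have hre : (∫ ω, w i ω * w j ω * w j ω ∂μ) = ∫ ω, w j ω * w j ω * w i ω ∂μ := by
          congr 1; funext ω; ring
        rw [hre]
        exact covAux_E3zero hm hind hmean j j i hij hij
      · exact covAux_E3zero hm hind hmean i j k (fun h => hik h.symm) (fun h => hjk h.symm)

lemma covAux_E2full (i j : Fin d) :
    ∫ ω, w i ω * w j ω ∂μ = if i = j then ∫ ω, w i ω * w i ω ∂μ else 0 := by
  by_cases h : i = j
  · subst h; simp
  · rw [if_neg h]; exact covAux_E2zero hm hind hmean i j h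

lemma covAux_E4full (i j k l : Fin d) :
    ∫ ω, w i ω * w j ω * w k ω * w l ω ∂μ
      = (if i = j then (1:ℝ) else 0) * (if k = l then 1 else 0)
          * ((∫ ω, w i ω * w i ω ∂μ) * ∫ ω, w k ω * w k ω ∂μ)
        + (if i = k then (1:ℝ) else 0) * (if j = l then 1 else 0)
          * ((∫ ω, w i ω * w i ω ∂μ) * ∫ ω, w j ω * w j ω ∂μ)
        + (if i = l then (1:ℝ) else 0) * (if j = k then 1 else 0)
          * ((∫ ω, w i ω * w i ω ∂μ) * ∫ ω, w j ω * w j ω ∂μ)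
        + (if i = j ∧ j = k ∧ k = l then
            (∫ ω, w i ω * w i ω * w i ω * w i ω ∂μ)
              - 3 * ((∫ ω, w i ω * w i ω ∂μ) * ∫ ω, w i ω * w i ω ∂μ) else 0) := by
  by_cases hij : i = j
  · subst hij
    by_cases hkl : k = l
    · subst hkl
      by_cases hik : i = k
      · subst hik; simp; ring
      · have hki : ¬ k = i := fun h => hik h.symm
        have hre : (∫ ω, w i ω * w i ω * w k ω * w k ω ∂μ)
            = ∫ ω, w i ω * w i ω * (w k ω * w k ω) ∂μ := by congr 1; funext ω; ring
        rw [hre, covAux_E22 hm hind hmean i k hik]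
        simp [hik, hki]
    · by_cases hik : i = k
      · subst hik
        have hli : ¬ l = i := fun h => hkl h.symm
        have hil : ¬ i = l := hkl
        rw [covAux_E4zero hm hind hmean i i i l hli hli hli]
        simp [hkl, hil]
      · by_cases hil : i = l
        · subst hil
          have hki : ¬ k = i := fun h => hik h.symm
          have hre : (∫ ω, w i ω * w i ω * w k ω * w i ω ∂μ)
              = ∫ ω, w i ω * w i ω * w i ω * w k ω ∂μ := by congr 1; funext ω; ring
          rw [hre, covAux_E4zero hm hind hmean i i i k hki hki hki]
          simp [hik, hki, hkl]
        · have hli : ¬ l = i := fun h => hil h.symm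
          have hlk : ¬ l = k := fun h => hkl h.symm
          rw [covAux_E4zero hm hind hmean i i k l hli hli hlk]
          simp [hkl, hik, hil]
  · have hji : ¬ j = i := fun h => hij h.symm
    by_cases hkl : k = l
    · subst hkl
      by_cases hik : i = k
      · subst hik
        have hre : (∫ ω, w i ω * w j ω * w i ω * w i ω ∂μ)
            = ∫ ω, w i ω * w i ω * w i ω * w j ω ∂μ := by congr 1; funext ω; ring
        rw [hre, covAux_E4zero hm hind hmean i i i j hji hji hji]
        simp [hij, hji]
      · by_cases hjk : j = k
        · subst hjk
          have hre : (∫ ω, w i ω * w j ω * w j ω * w j ω ∂μ)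
              = ∫ ω, w j ω * w j ω * w j ω * w i ω ∂μ := by congr 1; funext ω; ring
          rw [hre, covAux_E4zero hm hind hmean j j j i hij hij hij]
          simp [hij, hik]
        · have hre : (∫ ω, w i ω * w j ω * w k ω * w k ω ∂μ)
              = ∫ ω, w j ω * w k ω * w k ω * w i ω ∂μ := by congr 1; funext ω; ring
          rw [hre, covAux_E4zero hm hind hmean j k k i hij hik hik]
          simp [hij, hik, hjk]
    · by_cases hik : i = k
      · subst hik
        by_cases hjl : j = l
        · subst hjl
          have hre : (∫ ω, w i ω * w j ω * w i ω * w j ω ∂μ)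
              = ∫ ω, w i ω * w i ω * (w j ω * w j ω) ∂μ := by congr 1; funext ω; ring
          rw [hre, covAux_E22 hm hind hmean i j hij]
          simp [hij, hji]
        · have hlj : ¬ l = j := fun h => hjl h.symm
          have hli : ¬ l = i := fun h => hkl h.symm
          rw [covAux_E4zero hm hind hmean i j i l hli hlj hli]
          simp [hij, hjl, hkl]
      · by_cases hil : i = l
        · subst hil
          by_cases hjk : j = k
          · subst hjk
            have hre : (∫ ω, w i ω * w j ω * w j ω * w i ω ∂μ)
                = ∫ ω, w i ω * w i ω * (w j ω * w j ω) ∂μ := by congr 1; funext ω; ring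
            rw [hre, covAux_E22 hm hind hmean i j hij]
            simp [hij, hik]
          · have hre : (∫ ω, w i ω * w j ω * w k ω * w i ω ∂μ)
                = ∫ ω, w i ω * w k ω * w i ω * w j ω ∂μ := by congr 1; funext ω; ring
            rw [hre, covAux_E4zero hm hind hmean i k i j hji hjk hji]
            simp [hij, hik, hjk]
        · have hre : (∫ ω, w i ω * w j ω * w k ω * w l ω ∂μ)
              = ∫ ω, w j ω * w k ω * w l ω * w i ω ∂μ := by congr 1; funext ω; ring
          rw [hre, covAux_E4zero hm hind hmean j k l i hij hik hil]
          simp [hij, hik, hil]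

end AuxCov

lemma model_pair {d : ℕ} (c e s : Fin d → ℝ) :
    ∑ i, ∑ j, c i * e j * (if i = j then s i else 0) = ∑ i, c i * e i * s i := by
  simp [mul_ite, Finset.sum_ite_eq, Finset.mem_univ]

lemma model_triple {d : ℕ} (c e f m : Fin d → ℝ) :
    ∑ i, ∑ j, ∑ k, c i * e j * f k * (if i = j ∧ j = k then m i else 0)
      = ∑ i, c i * e i * f i * m i := by
  simp [mul_ite, ite_and, Finset.sum_ite_irrel, Finset.sum_ite_eq, Finset.mem_univ]

lemma model_quad {d : ℕ} (aa bb s q : Fin d → ℝ) :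
    ∑ i, ∑ j, ∑ k, ∑ l, aa i * aa j * (bb k * bb l) *
      ((if i = j then (1:ℝ) else 0) * (if k = l then 1 else 0) * (s i * s k)
       + (if i = k then (1:ℝ) else 0) * (if j = l then 1 else 0) * (s i * s j)
       + (if i = l then (1:ℝ) else 0) * (if j = k then 1 else 0) * (s i * s j)
       + (if i = j ∧ j = k ∧ k = l then q i else 0))
    = (∑ i, aa i * aa i * s i) * (∑ i, bb i * bb i * s i)
      + 2 * ((∑ i, aa i * bb i * s i) * (∑ i, aa i * bb i * s i))
      + ∑ i, aa i * aa i * (bb i * bb i) * q i := by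
  rw [Finset.sum_mul_sum, Finset.sum_mul_sum]
  simp only [mul_add, Finset.sum_add_distrib, ite_and, mul_ite, ite_mul, mul_zero, zero_mul,
    mul_one, one_mul, Finset.sum_ite_irrel, Finset.sum_ite_eq, Finset.sum_ite_eq',
    Finset.mem_univ, if_true, Finset.sum_const_zero, add_zero, zero_add, Finset.mul_sum,
    Finset.sum_mul]
  have e1 : (∑ x : Fin d, ∑ y : Fin d, aa x * aa x * (bb y * bb y) * (s x * s y))
      = ∑ i : Fin d, ∑ j : Fin d, aa i * aa i * s i * (bb j * bb j * s j) :=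
    Finset.sum_congr rfl fun i _ => Finset.sum_congr rfl fun j _ => by ring
  have e2 : (∑ x : Fin d, ∑ y : Fin d, aa x * aa y * (bb x * bb y) * (s x * s y))
      = ∑ x : Fin d, ∑ y : Fin d, aa x * bb x * s x * (aa y * bb y * s y) :=
    Finset.sum_congr rfl fun i _ => Finset.sum_congr rfl fun j _ => by ring
  have e3 : (∑ x : Fin d, ∑ y : Fin d, aa x * aa y * (bb y * bb x) * (s x * s y))
      = ∑ x : Fin d, ∑ y : Fin d, aa x * bb x * s x * (aa y * bb y * s y) :=
    Finset.sum_congr rfl fun i _ => Finset.sum_congr rfl fun j _ => by ring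
  have e5 : (∑ x : Fin d, ∑ y : Fin d, 2 * (aa x * bb x * s x * (aa y * bb y * s y)))
      = (∑ x : Fin d, ∑ y : Fin d, aa x * bb x * s x * (aa y * bb y * s y))
        + ∑ x : Fin d, ∑ y : Fin d, aa x * bb x * s x * (aa y * bb y * s y) := by
    rw [← Finset.sum_add_distrib]
    refine Finset.sum_congr rfl fun x _ => ?_
    rw [← Finset.sum_add_distrib]
    exact Finset.sum_congr rfl fun y _ => by ring
  rw [e1, e2, e3, e5]
  ring



/-- For a random vector `z` with mutually independent components having finite
fourth moments, writing `μᵢ = E[zᵢ]`, `σᵢ² = Var(zᵢ)`, `m₃ᵢ = E[(zᵢ − μᵢ)³]` and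
`m₄ᵢ = E[(zᵢ − μᵢ)⁴]`, for all `a b ∈ ℝᵈ`, with `U = ∑ᵢ aᵢ zᵢ`, `V = ∑ⱼ bⱼ zⱼ` and
`Cov(U², V²) = E[U² V²] − E[U²] E[V²]`:
`Cov(U², V²) = 4 (∑ᵢ aᵢ μᵢ)(∑ⱼ bⱼ μⱼ)(∑ᵢ aᵢ bᵢ σᵢ²) + 2 (∑ᵢ aᵢ bᵢ σᵢ²)²
  + ∑ᵢ aᵢ² bᵢ² (m₄ᵢ − 3 σᵢ⁴) + 2 (∑ᵢ aᵢ μᵢ)(∑ᵢ aᵢ bᵢ² m₃ᵢ) + 2 (∑ⱼ bⱼ μⱼ)(∑ᵢ aᵢ² bᵢ m₃ᵢ)`. -/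
theorem cov_square_with_square
    {Ω : Type*} {mΩ : MeasurableSpace Ω} (μ : Measure Ω) [IsProbabilityMeasure μ]
    {d : ℕ} (z : Fin d → Ω → ℝ)
    (hmeas : ∀ i, Measurable (z i))
    (hL4 : ∀ i, MemLp (z i) 4 μ)
    (hindep : iIndepFun z μ)
    (a b : Fin d → ℝ) :
    (∫ ω, (∑ i, a i * z i ω) ^ 2 * (∑ j, b j * z j ω) ^ 2 ∂μ)
        - (∫ ω, (∑ i, a i * z i ω) ^ 2 ∂μ) * (∫ ω, (∑ j, b j * z j ω) ^ 2 ∂μ)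
      = 4 * (∑ i, a i * ∫ x, z i x ∂μ) * (∑ j, b j * ∫ x, z j x ∂μ)
            * (∑ i, a i * b i * variance (z i) μ)
        + 2 * (∑ i, a i * b i * variance (z i) μ) ^ 2
        + (∑ i, (a i) ^ 2 * (b i) ^ 2
            * ((∫ ω, (z i ω - ∫ x, z i x ∂μ) ^ 4 ∂μ) - 3 * (variance (z i) μ) ^ 2))
        + 2 * (∑ i, a i * ∫ x, z i x ∂μ)
            * (∑ i, a i * (b i) ^ 2 * ∫ ω, (z i ω - ∫ x, z i x ∂μ) ^ 3 ∂μ)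
        + 2 * (∑ j, b j * ∫ x, z j x ∂μ)
            * (∑ i, (a i) ^ 2 * b i * ∫ ω, (z i ω - ∫ x, z i x ∂μ) ^ 3 ∂μ) := by
  classical
  set m1 : Fin d → ℝ := fun i => ∫ x, z i x ∂μ with hm1def
  set w : Fin d → Ω → ℝ := fun i ω => z i ω - m1 i with hwdef
  have hwm : ∀ i, Measurable (w i) := fun i => (hmeas i).sub measurable_const
  have hw4 : ∀ i, MemLp (w i) 4 μ := fun i => (hL4 i).sub (memLp_const (m1 i))
  have hw2 : ∀ i, MemLp (w i) 2 μ := fun i => (hw4 i).mono_exponent (by norm_num)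
  have hwind : iIndepFun w μ :=
    hindep.comp (fun i (x : ℝ) => x - m1 i) (fun i => measurable_id.sub_const (m1 i))
  have hwmean : ∀ i, ∫ ω, w i ω ∂μ = 0 := by
    intro i
    have hz : Integrable (z i) μ := (hL4 i).integrable (by norm_num)
    rw [hwdef]
    simp only
    rw [integral_sub hz (integrable_const _), integral_const, probReal_univ]
    simp [hm1def]
  have hvar : ∀ i, variance (z i) μ = ∫ ω, w i ω * w i ω ∂μ := by
    intro i
    rw [variance_eq_integral (hmeas i).aemeasurable]
    congr 1
    funext ω
    simp only [Pi.pow_apply, Pi.sub_apply, hwdef, hm1def]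
    ring
  have hfold1 : ∀ i, (∫ x, z i x ∂μ) = m1 i := fun i => by rw [hm1def]
  have hfold2 : ∀ i ω, z i ω - m1 i = w i ω := fun i ω => by rw [hwdef]
  have p2 : ∀ x : ℝ, x ^ 2 = x * x := fun x => by ring
  have p3 : ∀ x : ℝ, x ^ 3 = x * x * x := fun x => by ring
  have p4 : ∀ x : ℝ, x ^ 4 = x * x * x * x := fun x => by ring
  have hU : ∀ ω, (∑ i, a i * z i ω) = (∑ i, a i * m1 i) + ∑ i, a i * w i ω := by
    intro ω
    rw [← Finset.sum_add_distrib]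
    refine Finset.sum_congr rfl fun i _ => ?_
    simp only [hwdef]
    ring
  have hV : ∀ ω, (∑ j, b j * z j ω) = (∑ j, b j * m1 j) + ∑ j, b j * w j ω := by
    intro ω
    rw [← Finset.sum_add_distrib]
    refine Finset.sum_congr rfl fun j _ => ?_
    simp only [hwdef]
    ring
  -- integrability facts
  have hInt1 : ∀ i, Integrable (w i) μ := fun i => (hw2 i).integrable one_le_two
  have hMemMul : ∀ i j, MemLp (fun ω => w i ω * w j ω) 2 μ :=
    fun i j => covAux_memℒp_mul (hw4 i) (hw4 j)
  have hImul2 : ∀ i j : Fin d, Integrable (fun ω => w i ω * w j ω) μ :=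
    fun i j => covAux_integrable_mul (hw2 i) (hw2 j)
  have hImul3 : ∀ i j k : Fin d, Integrable (fun ω => w i ω * w j ω * w k ω) μ :=
    fun i j k => covAux_integrable_mul (hMemMul i j) (hw2 k)
  have hImul4 : ∀ i j k l : Fin d, Integrable (fun ω => w i ω * w j ω * w k ω * w l ω) μ := by
    intro i j k l
    have h := covAux_integrable_mul (hMemMul i j) (hMemMul k l)
    have he : (fun ω => w i ω * w j ω * (w k ω * w l ω))
        = fun ω => w i ω * w j ω * w k ω * w l ω := by funext ω; ring
    rwa [he] at h
  have hmem4 : ∀ (c : Fin d → ℝ), MemLp (fun ω => ∑ i, c i * w i ω) 4 μ :=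
    fun c => memLp_finsetSum _ (fun i _ => (hw4 i).const_mul (c i))
  have hmem2 : ∀ (c : Fin d → ℝ), MemLp (fun ω => ∑ i, c i * w i ω) 2 μ :=
    fun c => (hmem4 c).mono_exponent (by norm_num)
  have hIsum : ∀ (c : Fin d → ℝ), Integrable (fun ω => ∑ i, c i * w i ω) μ :=
    fun c => (hmem2 c).integrable one_le_two
  -- first moment of sums
  have hIzero : ∀ (c : Fin d → ℝ), ∫ ω, (∑ i, c i * w i ω) ∂μ = 0 := by
    intro c
    rw [integral_finset_sum _ (fun i _ => (hInt1 i).const_mul (c i))]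
    simp [integral_const_mul, hwmean]
  -- second moments
  have hpair : ∀ (c e : Fin d → ℝ),
      ∫ ω, (∑ i, c i * w i ω) * (∑ j, e j * w j ω) ∂μ
        = ∑ i, c i * e i * ∫ ω, w i ω * w i ω ∂μ := by
    intro c e
    have hexp : (fun ω => (∑ i, c i * w i ω) * (∑ j, e j * w j ω))
        = fun ω => ∑ i, ∑ j, c i * e j * (w i ω * w j ω) := by
      funext ω
      rw [Finset.sum_mul_sum]
      exact Finset.sum_congr rfl fun i _ => Finset.sum_congr rfl fun j _ => by ring
    rw [hexp, integral_finset_sum _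
      (fun i _ => integrable_finset_sum _ fun j _ => (hImul2 i j).const_mul _)]
    have hstep : ∀ i : Fin d,
        (∫ ω, (∑ j, c i * e j * (w i ω * w j ω)) ∂μ)
          = ∑ j, c i * e j * (if i = j then ∫ ω, w i ω * w i ω ∂μ else 0) := by
      intro i
      rw [integral_finset_sum _ (fun j _ => (hImul2 i j).const_mul _)]
      refine Finset.sum_congr rfl fun j _ => ?_
      rw [integral_const_mul, covAux_E2full hwm hwind hwmean i j]
    calc ∑ i, ∫ ω, (∑ j, c i * e j * (w i ω * w j ω)) ∂μ
        = ∑ i, ∑ j, c i * e j * (if i = j then ∫ ω, w i ω * w i ω ∂μ else 0) :=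
          Finset.sum_congr rfl fun i _ => hstep i
      _ = ∑ i, c i * e i * ∫ ω, w i ω * w i ω ∂μ :=
          model_pair c e _
  -- third moments
  have htriple : ∀ (c e f : Fin d → ℝ),
      ∫ ω, (∑ i, c i * w i ω) * (∑ j, e j * w j ω) * (∑ k, f k * w k ω) ∂μ
        = ∑ i, c i * e i * f i * ∫ ω, w i ω * w i ω * w i ω ∂μ := by
    intro c e f
    have hexp : (fun ω => (∑ i, c i * w i ω) * (∑ j, e j * w j ω) * (∑ k, f k * w k ω))
        = fun ω => ∑ i, ∑ j, ∑ k, c i * e j * f k * (w i ω * w j ω * w k ω) := by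
      funext ω
      rw [Finset.sum_mul_sum, Finset.sum_mul]
      refine Finset.sum_congr rfl fun i _ => ?_
      rw [Finset.sum_mul]
      refine Finset.sum_congr rfl fun j _ => ?_
      rw [Finset.mul_sum]
      exact Finset.sum_congr rfl fun k _ => by ring
    rw [hexp, integral_finset_sum _ (fun i _ => integrable_finset_sum _ fun j _ =>
      integrable_finset_sum _ fun k _ => (hImul3 i j k).const_mul _)]
    have hstep : ∀ i : Fin d,
        (∫ ω, (∑ j, ∑ k, c i * e j * f k * (w i ω * w j ω * w k ω)) ∂μ)
          = ∑ j, ∑ k, c i * e j * f k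
              * (if i = j ∧ j = k then ∫ ω, w i ω * w i ω * w i ω ∂μ else 0) := by
      intro i
      rw [integral_finset_sum _ (fun j _ => integrable_finset_sum _ fun k _ =>
        (hImul3 i j k).const_mul _)]
      refine Finset.sum_congr rfl fun j _ => ?_
      rw [integral_finset_sum _ (fun k _ => (hImul3 i j k).const_mul _)]
      refine Finset.sum_congr rfl fun k _ => ?_
      rw [integral_const_mul, covAux_E3full hwm hwind hwmean i j k]
    calc ∑ i, ∫ ω, (∑ j, ∑ k, c i * e j * f k * (w i ω * w j ω * w k ω)) ∂μ
        = ∑ i, ∑ j, ∑ k, c i * e j * f k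
            * (if i = j ∧ j = k then ∫ ω, w i ω * w i ω * w i ω ∂μ else 0) :=
          Finset.sum_congr rfl fun i _ => hstep i
      _ = ∑ i, c i * e i * f i * ∫ ω, w i ω * w i ω * w i ω ∂μ := model_triple c e f _
  -- fourth moments
  have hquad : ∫ ω, (∑ i, a i * w i ω) * (∑ i, a i * w i ω)
        * ((∑ j, b j * w j ω) * (∑ j, b j * w j ω)) ∂μ
      = (∑ i, a i * a i * ∫ ω, w i ω * w i ω ∂μ)
          * (∑ i, b i * b i * ∫ ω, w i ω * w i ω ∂μ)
        + 2 * ((∑ i, a i * b i * ∫ ω, w i ω * w i ω ∂μ)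
            * (∑ i, a i * b i * ∫ ω, w i ω * w i ω ∂μ))
        + ∑ i, a i * a i * (b i * b i)
            * ((∫ ω, w i ω * w i ω * w i ω * w i ω ∂μ)
              - 3 * ((∫ ω, w i ω * w i ω ∂μ) * ∫ ω, w i ω * w i ω ∂μ)) := by
    have hexp : (fun ω => (∑ i, a i * w i ω) * (∑ i, a i * w i ω)
          * ((∑ j, b j * w j ω) * (∑ j, b j * w j ω)))
        = fun ω => ∑ i, ∑ j, ∑ k, ∑ l, a i * a j * (b k * b l)
            * (w i ω * w j ω * w k ω * w l ω) := by
      funext ω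
      rw [Finset.sum_mul_sum, Finset.sum_mul_sum (f := fun k => b k * w k ω), Finset.sum_mul]
      refine Finset.sum_congr rfl fun i _ => ?_
      rw [Finset.sum_mul]
      refine Finset.sum_congr rfl fun j _ => ?_
      rw [Finset.mul_sum]
      refine Finset.sum_congr rfl fun k _ => ?_
      rw [Finset.mul_sum]
      exact Finset.sum_congr rfl fun l _ => by ring
    rw [hexp, integral_finset_sum _ (fun i _ => integrable_finset_sum _ fun j _ =>
      integrable_finset_sum _ fun k _ => integrable_finset_sum _ fun l _ =>
        (hImul4 i j k l).const_mul _)]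
    have hstep : ∀ i : Fin d,
        (∫ ω, (∑ j, ∑ k, ∑ l, a i * a j * (b k * b l) * (w i ω * w j ω * w k ω * w l ω)) ∂μ)
          = ∑ j, ∑ k, ∑ l, a i * a j * (b k * b l)
              * ((if i = j then (1:ℝ) else 0) * (if k = l then 1 else 0)
                  * ((∫ ω, w i ω * w i ω ∂μ) * ∫ ω, w k ω * w k ω ∂μ)
                + (if i = k then (1:ℝ) else 0) * (if j = l then 1 else 0)
                  * ((∫ ω, w i ω * w i ω ∂μ) * ∫ ω, w j ω * w j ω ∂μ)
                + (if i = l then (1:ℝ) else 0) * (if j = k then 1 else 0)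
                  * ((∫ ω, w i ω * w i ω ∂μ) * ∫ ω, w j ω * w j ω ∂μ)
                + (if i = j ∧ j = k ∧ k = l then
                    (∫ ω, w i ω * w i ω * w i ω * w i ω ∂μ)
                      - 3 * ((∫ ω, w i ω * w i ω ∂μ) * ∫ ω, w i ω * w i ω ∂μ) else 0)) := by
      intro i
      rw [integral_finset_sum _ (fun j _ => integrable_finset_sum _ fun k _ =>
        integrable_finset_sum _ fun l _ => (hImul4 i j k l).const_mul _)]
      refine Finset.sum_congr rfl fun j _ => ?_
      rw [integral_finset_sum _ (fun k _ => integrable_finset_sum _ fun l _ =>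
        (hImul4 i j k l).const_mul _)]
      refine Finset.sum_congr rfl fun k _ => ?_
      rw [integral_finset_sum _ (fun l _ => (hImul4 i j k l).const_mul _)]
      refine Finset.sum_congr rfl fun l _ => ?_
      rw [integral_const_mul, covAux_E4full hwm hwind hwmean i j k l]
    calc ∑ i, ∫ ω, (∑ j, ∑ k, ∑ l, a i * a j * (b k * b l)
            * (w i ω * w j ω * w k ω * w l ω)) ∂μ
        = ∑ i, ∑ j, ∑ k, ∑ l, a i * a j * (b k * b l)
            * ((if i = j then (1:ℝ) else 0) * (if k = l then 1 else 0)
                * ((∫ ω, w i ω * w i ω ∂μ) * ∫ ω, w k ω * w k ω ∂μ)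
              + (if i = k then (1:ℝ) else 0) * (if j = l then 1 else 0)
                * ((∫ ω, w i ω * w i ω ∂μ) * ∫ ω, w j ω * w j ω ∂μ)
              + (if i = l then (1:ℝ) else 0) * (if j = k then 1 else 0)
                * ((∫ ω, w i ω * w i ω ∂μ) * ∫ ω, w j ω * w j ω ∂μ)
              + (if i = j ∧ j = k ∧ k = l then
                  (∫ ω, w i ω * w i ω * w i ω * w i ω ∂μ)
                    - 3 * ((∫ ω, w i ω * w i ω ∂μ) * ∫ ω, w i ω * w i ω ∂μ) else 0)) :=
          Finset.sum_congr rfl fun i _ => hstep i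
      _ = _ := model_quad a b _ _
  -- expansion of the square integrals
  have hsq : ∀ (C : ℝ) (c : Fin d → ℝ),
      ∫ ω, (C + ∑ i, c i * w i ω) * (C + ∑ i, c i * w i ω) ∂μ
        = C * C + ∑ i, c i * c i * ∫ ω, w i ω * w i ω ∂μ := by
    intro C c
    have hexp : (fun ω => (C + ∑ i, c i * w i ω) * (C + ∑ i, c i * w i ω))
        = fun ω => C * C + (2 * C) * (∑ i, c i * w i ω)
            + (∑ i, c i * w i ω) * (∑ i, c i * w i ω) := funext fun ω => by ring
    have i1 : Integrable (fun _ : Ω => C * C) μ := integrable_const _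
    have i2 : Integrable (fun ω => (2 * C) * (∑ i, c i * w i ω)) μ :=
      (hIsum c).const_mul _
    have i3 : Integrable (fun ω => (∑ i, c i * w i ω) * (∑ i, c i * w i ω)) μ :=
      covAux_integrable_mul (hmem2 c) (hmem2 c)
    have i12 : Integrable (fun ω => C * C + (2 * C) * (∑ i, c i * w i ω)) μ := i1.add i2
    rw [hexp, integral_add i12 i3, integral_add i1 i2, integral_const, probReal_univ,
      integral_const_mul, hIzero c, hpair c c]
    simp
  -- expansion of the big integral
  have hbig : ∫ ω, ((∑ i, a i * m1 i) + ∑ i, a i * w i ω)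
        * ((∑ i, a i * m1 i) + ∑ i, a i * w i ω)
        * (((∑ j, b j * m1 j) + ∑ j, b j * w j ω)
          * ((∑ j, b j * m1 j) + ∑ j, b j * w j ω)) ∂μ
      = (∑ i, a i * m1 i) * (∑ i, a i * m1 i) * ((∑ j, b j * m1 j) * (∑ j, b j * m1 j))
        + ((∑ j, b j * m1 j) * (∑ j, b j * m1 j))
            * (∑ i, a i * a i * ∫ ω, w i ω * w i ω ∂μ)
        + ((∑ i, a i * m1 i) * (∑ i, a i * m1 i))
            * (∑ i, b i * b i * ∫ ω, w i ω * w i ω ∂μ)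
        + 4 * (∑ i, a i * m1 i) * (∑ j, b j * m1 j)
            * (∑ i, a i * b i * ∫ ω, w i ω * w i ω ∂μ)
        + 2 * (∑ j, b j * m1 j) * (∑ i, a i * a i * b i * ∫ ω, w i ω * w i ω * w i ω ∂μ)
        + 2 * (∑ i, a i * m1 i) * (∑ i, a i * b i * b i * ∫ ω, w i ω * w i ω * w i ω ∂μ)
        + ((∑ i, a i * a i * ∫ ω, w i ω * w i ω ∂μ)
              * (∑ i, b i * b i * ∫ ω, w i ω * w i ω ∂μ)
            + 2 * ((∑ i, a i * b i * ∫ ω, w i ω * w i ω ∂μ)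
                * (∑ i, a i * b i * ∫ ω, w i ω * w i ω ∂μ))
            + ∑ i, a i * a i * (b i * b i)
                * ((∫ ω, w i ω * w i ω * w i ω * w i ω ∂μ)
                  - 3 * ((∫ ω, w i ω * w i ω ∂μ) * ∫ ω, w i ω * w i ω ∂μ))) := by
    set A := ∑ i, a i * m1 i with hA
    set B := ∑ j, b j * m1 j with hB
    have hexp : (fun ω => (A + ∑ i, a i * w i ω) * (A + ∑ i, a i * w i ω)
          * ((B + ∑ j, b j * w j ω) * (B + ∑ j, b j * w j ω)))
        = fun ω => A * A * (B * B)
            + (2 * A * (B * B)) * (∑ i, a i * w i ω)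
            + (2 * (A * A) * B) * (∑ j, b j * w j ω)
            + (B * B) * ((∑ i, a i * w i ω) * (∑ i, a i * w i ω))
            + (A * A) * ((∑ j, b j * w j ω) * (∑ j, b j * w j ω))
            + (4 * A * B) * ((∑ i, a i * w i ω) * (∑ j, b j * w j ω))
            + (2 * B) * ((∑ i, a i * w i ω) * (∑ i, a i * w i ω) * (∑ j, b j * w j ω))
            + (2 * A) * ((∑ i, a i * w i ω) * (∑ j, b j * w j ω) * (∑ j, b j * w j ω))
            + ((∑ i, a i * w i ω) * (∑ i, a i * w i ω)
                * ((∑ j, b j * w j ω) * (∑ j, b j * w j ω))) := funext fun ω => by ring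
    have i1 : Integrable (fun _ : Ω => A * A * (B * B)) μ := integrable_const _
    have i2 : Integrable (fun ω => (2 * A * (B * B)) * (∑ i, a i * w i ω)) μ :=
      (hIsum a).const_mul _
    have i3 : Integrable (fun ω => (2 * (A * A) * B) * (∑ j, b j * w j ω)) μ :=
      (hIsum b).const_mul _
    have iaa : Integrable (fun ω => (∑ i, a i * w i ω) * (∑ i, a i * w i ω)) μ :=
      covAux_integrable_mul (hmem2 a) (hmem2 a)
    have ibb : Integrable (fun ω => (∑ j, b j * w j ω) * (∑ j, b j * w j ω)) μ :=
      covAux_integrable_mul (hmem2 b) (hmem2 b)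
    have iab : Integrable (fun ω => (∑ i, a i * w i ω) * (∑ j, b j * w j ω)) μ :=
      covAux_integrable_mul (hmem2 a) (hmem2 b)
    have i4 := iaa.const_mul (B * B)
    have i5 := ibb.const_mul (A * A)
    have i6 := iab.const_mul (4 * A * B)
    have maa : MemLp (fun ω => (∑ i, a i * w i ω) * (∑ i, a i * w i ω)) 2 μ :=
      covAux_memℒp_mul (hmem4 a) (hmem4 a)
    have mbb : MemLp (fun ω => (∑ j, b j * w j ω) * (∑ j, b j * w j ω)) 2 μ :=
      covAux_memℒp_mul (hmem4 b) (hmem4 b)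
    have iaab : Integrable (fun ω => (∑ i, a i * w i ω) * (∑ i, a i * w i ω)
        * (∑ j, b j * w j ω)) μ := covAux_integrable_mul maa (hmem2 b)
    have iabb : Integrable (fun ω => (∑ i, a i * w i ω) * (∑ j, b j * w j ω)
        * (∑ j, b j * w j ω)) μ :=
      covAux_integrable_mul (covAux_memℒp_mul (hmem4 a) (hmem4 b)) (hmem2 b)
    have i7 := iaab.const_mul (2 * B)
    have i8 := iabb.const_mul (2 * A)
    have i9 : Integrable (fun ω => (∑ i, a i * w i ω) * (∑ i, a i * w i ω)
        * ((∑ j, b j * w j ω) * (∑ j, b j * w j ω))) μ := by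
      have h := covAux_integrable_mul maa mbb
      exact h
    have s12 : Integrable (fun ω => A * A * (B * B)
        + (2 * A * (B * B)) * (∑ i, a i * w i ω)) μ := i1.add i2
    have s13 : Integrable (fun ω => A * A * (B * B)
        + (2 * A * (B * B)) * (∑ i, a i * w i ω)
        + (2 * (A * A) * B) * (∑ j, b j * w j ω)) μ := s12.add i3
    have s14 : Integrable (fun ω => A * A * (B * B)
        + (2 * A * (B * B)) * (∑ i, a i * w i ω)
        + (2 * (A * A) * B) * (∑ j, b j * w j ω)
        + (B * B) * ((∑ i, a i * w i ω) * (∑ i, a i * w i ω))) μ := s13.add i4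
    have s15 : Integrable (fun ω => A * A * (B * B)
        + (2 * A * (B * B)) * (∑ i, a i * w i ω)
        + (2 * (A * A) * B) * (∑ j, b j * w j ω)
        + (B * B) * ((∑ i, a i * w i ω) * (∑ i, a i * w i ω))
        + (A * A) * ((∑ j, b j * w j ω) * (∑ j, b j * w j ω))) μ := s14.add i5
    have s16 : Integrable (fun ω => A * A * (B * B)
        + (2 * A * (B * B)) * (∑ i, a i * w i ω)
        + (2 * (A * A) * B) * (∑ j, b j * w j ω)
        + (B * B) * ((∑ i, a i * w i ω) * (∑ i, a i * w i ω))
        + (A * A) * ((∑ j, b j * w j ω) * (∑ j, b j * w j ω))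
        + (4 * A * B) * ((∑ i, a i * w i ω) * (∑ j, b j * w j ω))) μ := s15.add i6
    have s17 : Integrable (fun ω => A * A * (B * B)
        + (2 * A * (B * B)) * (∑ i, a i * w i ω)
        + (2 * (A * A) * B) * (∑ j, b j * w j ω)
        + (B * B) * ((∑ i, a i * w i ω) * (∑ i, a i * w i ω))
        + (A * A) * ((∑ j, b j * w j ω) * (∑ j, b j * w j ω))
        + (4 * A * B) * ((∑ i, a i * w i ω) * (∑ j, b j * w j ω))
        + (2 * B) * ((∑ i, a i * w i ω) * (∑ i, a i * w i ω) * (∑ j, b j * w j ω))) μ :=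
      s16.add i7
    have s18 : Integrable (fun ω => A * A * (B * B)
        + (2 * A * (B * B)) * (∑ i, a i * w i ω)
        + (2 * (A * A) * B) * (∑ j, b j * w j ω)
        + (B * B) * ((∑ i, a i * w i ω) * (∑ i, a i * w i ω))
        + (A * A) * ((∑ j, b j * w j ω) * (∑ j, b j * w j ω))
        + (4 * A * B) * ((∑ i, a i * w i ω) * (∑ j, b j * w j ω))
        + (2 * B) * ((∑ i, a i * w i ω) * (∑ i, a i * w i ω) * (∑ j, b j * w j ω))
        + (2 * A) * ((∑ i, a i * w i ω) * (∑ j, b j * w j ω) * (∑ j, b j * w j ω))) μ :=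
      s17.add i8
    rw [hexp,
      integral_add s18 i9,
      integral_add s17 i8,
      integral_add s16 i7,
      integral_add s15 i6,
      integral_add s14 i5,
      integral_add s13 i4,
      integral_add s12 i3,
      integral_add i1 i2, integral_const, probReal_univ]
    simp only [integral_const_mul]
    rw [hIzero a, hIzero b, hpair a a, hpair b b, hpair a b, htriple a a b, htriple a b b,
      hquad]
    simp only [ENNReal.toReal_one, one_smul, smul_eq_mul, mul_zero]
    ring
  -- final assembly
  simp only [hvar, hfold1, hfold2, p2, p3, p4, hU, hV]
  rw [hbig, hsq (∑ i, a i * m1 i) a, hsq (∑ j, b j * m1 j) b]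
  have fix1 : (∑ i, a i * b i * b i * ∫ ω, w i ω * w i ω * w i ω ∂μ)
      = ∑ x, a x * (b x * b x) * ∫ ω, w x ω * w x ω * w x ω ∂μ :=
    Finset.sum_congr rfl fun i _ => by ring
  rw [fix1]
  ring
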